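/- Let V : Matrix n n ℂ be Hermitian and positive semidefinite and let c > 0 be such that -(𝓖(V) + c·V) is positive semidefinite (the condition 𝓖(V) ≤ -c·V). Then for every state ρ₀ the trajectory converges to the zero solutions of V: Re(trace(ρ_t * V)) → 0 as t → ∞. -/

import Mathlib

open Matrix ComplexOrder

attribute [local instance] Matrix.linftyOpNormedAddCommGroup Matrix.linftyOpNormedSpace

variable {n : Type*}

/-- The Heisenberg (Lindblad) generator
`𝓖(X) = -i·(X*H - H*X) + Lᴴ*X*L - (1/2)·(Lᴴ*L*X + X*Lᴴ*L)`. -/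
noncomputable def heisGen [Fintype n] [DecidableEq n] (H L X : Matrix n n ℂ) : Matrix n n ℂ :=
  -Complex.I • (X * H - H * X) + Lᴴ * X * L - (1/2 : ℂ) • (Lᴴ * L * X + X * (Lᴴ * L))

/-- The Schrödinger (predual) generator
`𝓛(ρ) = -i·(H*ρ - ρ*H) + L*ρ*Lᴴ - (1/2)·(Lᴴ*L*ρ + ρ*Lᴴ*L)`, bundled as a linear map. -/
noncomputable def schrodGenLM [Fintype n] [DecidableEq n] (H L : Matrix n n ℂ) :
    Matrix n n ℂ →ₗ[ℂ] Matrix n n ℂ :=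
  -Complex.I • (LinearMap.mulLeft ℂ H - LinearMap.mulRight ℂ H)
    + (LinearMap.mulRight ℂ Lᴴ).comp (LinearMap.mulLeft ℂ L)
    - (1/2 : ℂ) • (LinearMap.mulLeft ℂ (Lᴴ * L) + LinearMap.mulRight ℂ (Lᴴ * L))

lemma schrodGenLM_apply [Fintype n] [DecidableEq n] (H L ρ : Matrix n n ℂ) :
    schrodGenLM H L ρ =
      -Complex.I • (H * ρ - ρ * H) + L * ρ * Lᴴ - (1/2 : ℂ) • (Lᴴ * L * ρ + ρ * (Lᴴ * L)) := by
  simp [schrodGenLM, LinearMap.mulLeft, LinearMap.mulRight, mul_assoc]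

/-- The trajectory `ρ_t = exp (t • 𝓛) ρ₀`, where `𝓛` is regarded as a continuous linear
endomorphism of `Matrix n n ℂ`. -/
noncomputable def traj [Fintype n] [DecidableEq n] (H L ρ₀ : Matrix n n ℂ) (t : ℝ) :
    Matrix n n ℂ :=
  letI : TopologicalSpace (Matrix n n ℂ) := PseudoMetricSpace.toUniformSpace.toTopologicalSpace
  NormedSpace.exp (t • (LinearMap.toContinuousLinearMap (schrodGenLM H L))) ρ₀


set_option synthInstance.maxHeartbeats 1000000
set_option maxHeartbeats 1000000
set_option linter.unusedSectionVars false
set_option linter.unusedVariables false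

open scoped Nat

open scoped Nat
section Generic
variable {𝔸 : Type*} [NormedRing 𝔸] [NormedAlgebra ℂ 𝔸] [CompleteSpace 𝔸]

lemma norm_inv_factorial (k : ℕ) : ‖((k ! : ℂ))⁻¹‖ = ((k ! : ℝ))⁻¹ := by
  rw [norm_inv, Complex.norm_natCast]

lemma my_norm_exp_le (x : 𝔸) (h1 : ‖(1:𝔸)‖ ≤ 1) : ‖NormedSpace.exp x‖ ≤ Real.exp ‖x‖ := by
  rw [NormedSpace.exp_eq_tsum ℂ]
  have hsum := NormedSpace.norm_expSeries_summable' (𝕂 := ℂ) x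
  have hb : Summable (fun k : ℕ => ‖x‖ ^ k / k !) := Real.summable_pow_div_factorial ‖x‖
  have hle : ∀ k : ℕ, ‖((k ! : ℂ))⁻¹ • x ^ k‖ ≤ ‖x‖ ^ k / k ! := by
    intro k
    rw [norm_smul, norm_inv_factorial, div_eq_inv_mul]
    have hk0 : (0:ℝ) ≤ ((k ! : ℝ))⁻¹ := by positivity
    rcases Nat.eq_zero_or_pos k with hk | hk
    · simp only [hk]
      simpa using h1
    · exact mul_le_mul_of_nonneg_left (norm_pow_le' x hk) hk0
  calc ‖∑' k : ℕ, ((k ! : ℂ))⁻¹ • x ^ k‖ ≤ ∑' k : ℕ, ‖((k ! : ℂ))⁻¹ • x ^ k‖ :=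
        norm_tsum_le_tsum_norm hsum
    _ ≤ ∑' k : ℕ, ‖x‖ ^ k / k ! := Summable.tsum_le_tsum hle hsum hb
    _ = Real.exp ‖x‖ := by
        rw [Real.exp_eq_exp_ℝ, NormedSpace.exp_eq_tsum_div]

lemma my_norm_exp_sub_one_sub_le (x : 𝔸) :
    ‖NormedSpace.exp x - 1 - x‖ ≤ ‖x‖ ^ 2 * Real.exp ‖x‖ := by
  have hsum := NormedSpace.norm_expSeries_summable' (𝕂 := ℂ) x
  have hsum' : Summable (fun k : ℕ => ((k ! : ℂ))⁻¹ • x ^ k) := hsum.of_norm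
  have key : NormedSpace.exp x - 1 - x = ∑' k : ℕ, (((k + 2)! : ℂ))⁻¹ • x ^ (k + 2) := by
    have h := Summable.sum_add_tsum_nat_add (f := fun k : ℕ => ((k ! : ℂ))⁻¹ • x ^ k) 2 hsum'
    rw [NormedSpace.exp_eq_tsum ℂ]
    have hr : ∑ i ∈ Finset.range 2, ((i ! : ℂ))⁻¹ • x ^ i = 1 + x := by
      simp [Finset.sum_range_succ]
    show (∑' (k : ℕ), ((k ! : ℂ))⁻¹ • x ^ k) - 1 - x = _
    rw [← h, hr]
    abel
  rw [key]
  have hb : Summable (fun k : ℕ => ‖x‖ ^ 2 * (‖x‖ ^ k / k !)) :=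
    (Real.summable_pow_div_factorial ‖x‖).mul_left _
  have hle : ∀ k : ℕ, ‖(((k + 2)! : ℂ))⁻¹ • x ^ (k + 2)‖ ≤ ‖x‖ ^ 2 * (‖x‖ ^ k / k !) := by
    intro k
    rw [norm_smul, norm_inv_factorial]
    have h2 : ‖x ^ (k + 2)‖ ≤ ‖x‖ ^ (k + 2) := norm_pow_le' x (by omega)
    have h3 : (((k + 2)! : ℝ))⁻¹ ≤ ((k ! : ℝ))⁻¹ := by
      apply inv_anti₀
      · positivity
      · exact_mod_cast Nat.factorial_le (by omega)
    calc (((k + 2)! : ℝ))⁻¹ * ‖x ^ (k + 2)‖ ≤ ((k ! : ℝ))⁻¹ * ‖x‖ ^ (k + 2) := by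
          gcongr
      _ = ‖x‖ ^ 2 * (‖x‖ ^ k / k !) := by ring
  have hns : Summable (fun k : ℕ => ‖(((k + 2)! : ℂ))⁻¹ • x ^ (k + 2)‖) :=
    Summable.of_nonneg_of_le (fun k => norm_nonneg _) hle hb
  calc ‖∑' k : ℕ, (((k + 2)! : ℂ))⁻¹ • x ^ (k + 2)‖
      ≤ ∑' k : ℕ, ‖(((k + 2)! : ℂ))⁻¹ • x ^ (k + 2)‖ := norm_tsum_le_tsum_norm hns
    _ ≤ ∑' k : ℕ, ‖x‖ ^ 2 * (‖x‖ ^ k / k !) := Summable.tsum_le_tsum hle hns hb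
    _ = ‖x‖ ^ 2 * Real.exp ‖x‖ := by
        rw [tsum_mul_left, Real.exp_eq_exp_ℝ, NormedSpace.exp_eq_tsum_div]

lemma my_pow_sub_pow_norm_le {P Q : 𝔸} {r : ℝ} (hP : ‖P‖ ≤ r) (hQ : ‖Q‖ ≤ r) :
    ∀ k : ℕ, ‖P ^ (k + 1) - Q ^ (k + 1)‖ ≤ (k + 1) * r ^ k * ‖P - Q‖ := by
  have hr : 0 ≤ r := le_trans (norm_nonneg _) hP
  intro k
  induction k with
  | zero => simp
  | succ k ih =>
    have hsplit : P ^ (k + 1 + 1) - Q ^ (k + 1 + 1) = P * (P ^ (k + 1) - Q ^ (k + 1))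
        + (P - Q) * Q ^ (k + 1) := by
      rw [pow_succ' P (k + 1), pow_succ' Q (k + 1), mul_sub, sub_mul]
      abel
    rw [hsplit]
    have hQk : ‖Q ^ (k + 1)‖ ≤ r ^ (k + 1) := (norm_pow_le' Q (by omega)).trans (by gcongr)
    calc ‖P * (P ^ (k + 1) - Q ^ (k + 1)) + (P - Q) * Q ^ (k + 1)‖
        ≤ ‖P * (P ^ (k + 1) - Q ^ (k + 1))‖ + ‖(P - Q) * Q ^ (k + 1)‖ := norm_add_le _ _
      _ ≤ ‖P‖ * ‖P ^ (k + 1) - Q ^ (k + 1)‖ + ‖P - Q‖ * ‖Q ^ (k + 1)‖ := by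
          gcongr <;> exact norm_mul_le _ _
      _ ≤ r * ((k + 1) * r ^ k * ‖P - Q‖) + ‖P - Q‖ * r ^ (k + 1) := by
          gcongr
      _ = ((k + 1 : ℕ) + 1) * r ^ (k + 1) * ‖P - Q‖ := by push_cast; ring
end Generic


lemma psd_exists_conjTranspose_mul_self {n : Type*} [Fintype n] [DecidableEq n]
    {W : Matrix n n ℂ} (hW : W.PosSemidef) : ∃ B : Matrix n n ℂ, W = Bᴴ * B := by
  open scoped MatrixOrder Norms.L2Operator in
  obtain ⟨B, hB⟩ := CStarAlgebra.nonneg_iff_eq_star_mul_self.mp hW.nonneg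
  exact ⟨B, hB⟩

section Aux
variable {n : Type*} [Fintype n] [DecidableEq n]

noncomputable abbrev matTopAux : TopologicalSpace (Matrix n n ℂ) :=
  PseudoMetricSpace.toUniformSpace.toTopologicalSpace

attribute [local instance] matTopAux

noncomputable def LGen (H L : Matrix n n ℂ) : Matrix n n ℂ →L[ℂ] Matrix n n ℂ :=
  LinearMap.toContinuousLinearMap (schrodGenLM H L)

noncomputable def Amat (H L : Matrix n n ℂ) : Matrix n n ℂ :=
  -Complex.I • H - (1/2 : ℂ) • (Lᴴ * L)

noncomputable def MGen (H L : Matrix n n ℂ) : Matrix n n ℂ →L[ℂ] Matrix n n ℂ :=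
  LinearMap.toContinuousLinearMap
    ((LinearMap.mulRight ℂ (Amat H L)ᴴ).comp (LinearMap.mulLeft ℂ (Amat H L)))

noncomputable def TGen (H L : Matrix n n ℂ) (ε : ℝ) : Matrix n n ℂ →L[ℂ] Matrix n n ℂ :=
  LinearMap.toContinuousLinearMap
    ((LinearMap.mulRight ℂ (1 + (ε:ℂ) • Amat H L)ᴴ).comp
        (LinearMap.mulLeft ℂ (1 + (ε:ℂ) • Amat H L))
      + (ε:ℂ) • (LinearMap.mulRight ℂ Lᴴ).comp (LinearMap.mulLeft ℂ L))

lemma LGen_apply (H L ρ : Matrix n n ℂ) : LGen H L ρ = schrodGenLM H L ρ := rfl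

lemma MGen_apply (H L ρ : Matrix n n ℂ) : MGen H L ρ = Amat H L * ρ * (Amat H L)ᴴ := rfl

lemma TGen_apply (H L ρ : Matrix n n ℂ) (ε : ℝ) :
    TGen H L ε ρ = (1 + (ε:ℂ) • Amat H L) * ρ * (1 + (ε:ℂ) • Amat H L)ᴴ
      + (ε:ℂ) • (L * ρ * Lᴴ) := rfl

lemma Amat_conjTranspose (H L : Matrix n n ℂ) (hH : H.IsHermitian) :
    (Amat H L)ᴴ = Complex.I • H - (1/2 : ℂ) • (Lᴴ * L) := by
  simp [Amat, conjTranspose_sub, conjTranspose_smul, hH.eq, Complex.star_def, mul_assoc]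

lemma TGen_eq (H L : Matrix n n ℂ) (hH : H.IsHermitian) (ε : ℝ) :
    TGen H L ε = 1 + (ε:ℂ) • LGen H L + ((ε:ℂ)^2) • MGen H L := by
  ext ρ : 1
  simp only [ContinuousLinearMap.add_apply, ContinuousLinearMap.smul_apply,
    ContinuousLinearMap.one_apply, TGen_apply, LGen_apply, MGen_apply, schrodGenLM_apply]
  have expand : ∀ (a b ρ : Matrix n n ℂ) (ε : ℂ),
      (1 + ε • a) * ρ * (1 + ε • b) = ρ + ε • (a * ρ + ρ * b) + (ε^2) • (a * ρ * b) := by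
    intro a b ρ ε
    simp only [add_mul, mul_add, one_mul, mul_one, smul_mul_assoc, mul_smul_comm, smul_add,
      smul_smul, pow_two]
    abel
  have hct : (1 + (ε:ℂ) • Amat H L)ᴴ = 1 + (ε:ℂ) • (Amat H L)ᴴ := by
    simp [conjTranspose_add, conjTranspose_smul, Complex.star_def, Complex.conj_ofReal]
  rw [hct, expand, Amat_conjTranspose H L hH]
  rw [Amat]
  simp only [sub_mul, mul_sub, smul_mul_assoc, mul_smul_comm, neg_smul, neg_mul, smul_sub,
    smul_add]
  module


-- real-scalar psd smul
lemma psd_real_smul {ρ : Matrix n n ℂ} (hρ : ρ.PosSemidef) {ε : ℝ} (hε : 0 ≤ ε)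
    (L : Matrix n n ℂ) : ((ε:ℂ) • (L * ρ * Lᴴ)).PosSemidef := by
  have key : ((Real.sqrt ε : ℂ) • L) * ρ * ((Real.sqrt ε : ℂ) • L)ᴴ = (ε:ℂ) • (L * ρ * Lᴴ) := by
    rw [conjTranspose_smul]
    simp only [smul_mul_assoc, mul_smul_comm, smul_smul, Complex.star_def, Complex.conj_ofReal]
    norm_cast
    rw [Real.mul_self_sqrt hε]
  rw [← key]
  exact hρ.mul_mul_conjTranspose_same _

-- PSD closed under limits
lemma posSemidef_of_tendsto (f : ℕ → Matrix n n ℂ) (M : Matrix n n ℂ)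
    (hf : ∀ k, (f k).PosSemidef) (hlim : Filter.Tendsto f Filter.atTop (nhds M)) :
    M.PosSemidef := by
  have hent : ∀ x : n → ℂ, Filter.Tendsto (fun k => star x ⬝ᵥ (f k) *ᵥ x) Filter.atTop
      (nhds (star x ⬝ᵥ M *ᵥ x)) := by
    intro x
    let phi : Matrix n n ℂ →ₗ[ℂ] ℂ :=
      { toFun := fun N => star x ⬝ᵥ N *ᵥ x
        map_add' := by intro a b; simp [add_mulVec, dotProduct_add]
        map_smul' := by intro c a; simp [smul_mulVec, dotProduct_smul] }
    have hφ : Continuous phi := LinearMap.continuous_of_finiteDimensional phi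
    exact (hφ.tendsto M).comp hlim
  refine posSemidef_iff_dotProduct_mulVec.mpr ⟨?_, ?_⟩
  · -- Hermitian
    let ψ : Matrix n n ℂ →ₗ[ℝ] Matrix n n ℂ :=
      { toFun := fun N => Nᴴ
        map_add' := by intro a b; simp [conjTranspose_add]
        map_smul' := by intro c a; simp [conjTranspose_smul, Complex.star_def,
          Complex.conj_ofReal] }
    have hψ : Continuous ψ := LinearMap.continuous_of_finiteDimensional ψ
    have h1 : Filter.Tendsto (fun k => (f k)ᴴ) Filter.atTop (nhds Mᴴ) :=
      (hψ.tendsto M).comp hlim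
    have h2 : (fun k => (f k)ᴴ) = f := funext fun k => (hf k).1
    rw [h2] at h1
    exact (tendsto_nhds_unique h1 hlim)
  · intro x
    have := hent x
    have hre : Filter.Tendsto (fun k => (star x ⬝ᵥ (f k) *ᵥ x).re) Filter.atTop
        (nhds ((star x ⬝ᵥ M *ᵥ x).re)) := (Complex.continuous_re.tendsto _).comp this
    have him : Filter.Tendsto (fun k => (star x ⬝ᵥ (f k) *ᵥ x).im) Filter.atTop
        (nhds ((star x ⬝ᵥ M *ᵥ x).im)) := (Complex.continuous_im.tendsto _).comp this
    rw [Complex.le_def]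
    constructor
    · simp only [Complex.zero_re]
      refine le_of_tendsto_of_tendsto' tendsto_const_nhds hre fun k => ?_
      have := (hf k).dotProduct_mulVec_nonneg x
      rw [Complex.le_def] at this
      simpa using this.1
    · symm
      refine tendsto_nhds_unique him ?_
      have : (fun k => (star x ⬝ᵥ (f k) *ᵥ x).im) = fun _ => 0 := by
        funext k
        have := (hf k).dotProduct_mulVec_nonneg x
        rw [Complex.le_def] at this
        simpa using this.2.symm
      rw [this]
      exact tendsto_const_nhds


lemma real_smul_eq (t : ℝ) (X : Matrix n n ℂ →L[ℂ] Matrix n n ℂ) :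
    t • X = (t : ℂ) • X := by
  ext ρ i j
  simp [ContinuousLinearMap.smul_apply, Matrix.smul_apply, Complex.real_smul]

lemma norm_coe_smul (ε : ℝ) (hε0 : 0 ≤ ε) (X : Matrix n n ℂ →L[ℂ] Matrix n n ℂ) :
    ‖(ε:ℂ) • X‖ = ε * ‖X‖ := by
  have h := norm_smul (ε:ℂ) X
  rw [h]
  simp [Complex.norm_real, abs_of_nonneg hε0]

lemma norm_coe_sq_smul (ε : ℝ) (hε0 : 0 ≤ ε) (X : Matrix n n ℂ →L[ℂ] Matrix n n ℂ) :
    ‖((ε:ℂ)^2) • X‖ = ε^2 * ‖X‖ := by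
  have h := norm_smul ((ε:ℂ)^2) X
  rw [h]
  have : ‖(ε:ℂ)^2‖ = ε^2 := by
    rw [norm_pow]
    simp [Complex.norm_real, abs_of_nonneg hε0]
  rw [this]

lemma TGen_posSemidef {H L : Matrix n n ℂ} {ε : ℝ} (hε : 0 ≤ ε)
    {ρ : Matrix n n ℂ} (hρ : ρ.PosSemidef) : (TGen H L ε ρ).PosSemidef := by
  rw [TGen_apply]
  exact (hρ.mul_mul_conjTranspose_same _).add (psd_real_smul hρ hε L)

lemma TGen_pow_posSemidef {H L : Matrix n n ℂ} {ε : ℝ} (hε : 0 ≤ ε) (m : ℕ)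
    {ρ : Matrix n n ℂ} (hρ : ρ.PosSemidef) : (((TGen H L ε) ^ m) ρ).PosSemidef := by
  induction m generalizing ρ with
  | zero => simpa using hρ
  | succ m ih =>
    rw [pow_succ, ContinuousLinearMap.mul_apply]
    exact ih (TGen_posSemidef hε hρ)

lemma norm_TGen_le (H L : Matrix n n ℂ) (hH : H.IsHermitian) {ε : ℝ} (hε0 : 0 ≤ ε)
    (hε1 : ε ≤ 1) : ‖TGen H L ε‖ ≤ Real.exp (ε * (‖LGen H L‖ + ‖MGen H L‖)) := by
  rw [TGen_eq H L hH ε]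
  calc ‖1 + (ε:ℂ) • LGen H L + ((ε:ℂ)^2) • MGen H L‖
      ≤ ‖(1 : Matrix n n ℂ →L[ℂ] Matrix n n ℂ)‖ + ‖(ε:ℂ) • LGen H L‖
        + ‖((ε:ℂ)^2) • MGen H L‖ := norm_add₃_le
    _ ≤ 1 + ε * ‖LGen H L‖ + ε * ‖MGen H L‖ := by
        rw [norm_coe_smul ε hε0, norm_coe_sq_smul ε hε0]
        have h2 : ε^2 * ‖MGen H L‖ ≤ ε * ‖MGen H L‖ := by
          apply mul_le_mul_of_nonneg_right _ (norm_nonneg _)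
          nlinarith
        have h1 : ‖(1 : Matrix n n ℂ →L[ℂ] Matrix n n ℂ)‖ ≤ 1 :=
          ContinuousLinearMap.norm_id_le
        linarith
    _ = ε * (‖LGen H L‖ + ‖MGen H L‖) + 1 := by ring
    _ ≤ Real.exp (ε * (‖LGen H L‖ + ‖MGen H L‖)) := Real.add_one_le_exp _

lemma norm_expL_le (H L : Matrix n n ℂ) {ε : ℝ} (hε0 : 0 ≤ ε) :
    ‖NormedSpace.exp ((ε:ℂ) • LGen H L)‖ ≤ Real.exp (ε * (‖LGen H L‖ + ‖MGen H L‖)) := by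
  calc ‖NormedSpace.exp ((ε:ℂ) • LGen H L)‖ ≤ Real.exp ‖(ε:ℂ) • LGen H L‖ :=
        my_norm_exp_le _ ContinuousLinearMap.norm_id_le
    _ ≤ Real.exp (ε * (‖LGen H L‖ + ‖MGen H L‖)) := by
        apply Real.exp_le_exp.mpr
        rw [norm_coe_smul ε hε0]
        nlinarith [norm_nonneg (MGen H L), norm_nonneg (LGen H L)]

lemma norm_TGen_sub_exp_le (H L : Matrix n n ℂ) (hH : H.IsHermitian) {ε : ℝ} (hε0 : 0 ≤ ε)
    (hε1 : ε ≤ 1) :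
    ‖TGen H L ε - NormedSpace.exp ((ε:ℂ) • LGen H L)‖
      ≤ ε ^ 2 * (‖LGen H L‖ ^ 2 * Real.exp ‖LGen H L‖ + ‖MGen H L‖) := by
  have hnε : ‖(ε:ℂ) • LGen H L‖ = ε * ‖LGen H L‖ := norm_coe_smul ε hε0 (LGen H L)
  have key : TGen H L ε - NormedSpace.exp ((ε:ℂ) • LGen H L)
      = ((ε:ℂ)^2) • MGen H L
        - (NormedSpace.exp ((ε:ℂ) • LGen H L) - 1 - (ε:ℂ) • LGen H L) := by
    rw [TGen_eq H L hH ε]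
    abel
  rw [key]
  have hexple : Real.exp (ε * ‖LGen H L‖) ≤ Real.exp ‖LGen H L‖ := by
    apply Real.exp_le_exp.mpr
    nlinarith [norm_nonneg (LGen H L)]
  calc ‖((ε:ℂ)^2) • MGen H L - (NormedSpace.exp ((ε:ℂ) • LGen H L) - 1 - (ε:ℂ) • LGen H L)‖
      ≤ ‖((ε:ℂ)^2) • MGen H L‖
        + ‖NormedSpace.exp ((ε:ℂ) • LGen H L) - 1 - (ε:ℂ) • LGen H L‖ := norm_sub_le _ _
    _ ≤ ε^2 * ‖MGen H L‖ + ‖(ε:ℂ) • LGen H L‖^2 * Real.exp ‖(ε:ℂ) • LGen H L‖ := by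
        rw [norm_coe_sq_smul ε hε0]
        gcongr
        exact my_norm_exp_sub_one_sub_le _
    _ ≤ ε^2 * ‖MGen H L‖ + ε^2 * (‖LGen H L‖^2 * Real.exp ‖LGen H L‖) := by
        rw [hnε]
        have hmul : (ε * ‖LGen H L‖)^2 * Real.exp (ε * ‖LGen H L‖)
            ≤ ε^2 * (‖LGen H L‖^2 * Real.exp ‖LGen H L‖) := by
          calc (ε * ‖LGen H L‖)^2 * Real.exp (ε * ‖LGen H L‖)
              ≤ (ε * ‖LGen H L‖)^2 * Real.exp ‖LGen H L‖ := by gcongr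
            _ = ε^2 * (‖LGen H L‖^2 * Real.exp ‖LGen H L‖) := by ring
        linarith
    _ = ε ^ 2 * (‖LGen H L‖ ^ 2 * Real.exp ‖LGen H L‖ + ‖MGen H L‖) := by ring

lemma tendsto_TGen_pow (H L : Matrix n n ℂ) (hH : H.IsHermitian) {t : ℝ} (ht : 0 ≤ t)
    (ρ₀ : Matrix n n ℂ) :
    Filter.Tendsto (fun k : ℕ => ((TGen H L (t / (k + 1))) ^ (k + 1)) ρ₀)
      Filter.atTop (nhds (NormedSpace.exp ((t:ℂ) • LGen H L) ρ₀)) := by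
  set a := ‖LGen H L‖ + ‖MGen H L‖ with ha
  set C := ‖LGen H L‖ ^ 2 * Real.exp ‖LGen H L‖ + ‖MGen H L‖ with hC
  have hC0 : 0 ≤ C := by positivity
  have ha0 : 0 ≤ a := by positivity
  rw [tendsto_iff_norm_sub_tendsto_zero]
  apply squeeze_zero' (g := fun k : ℕ => Real.exp (t * a) * C * t ^ 2 * ‖ρ₀‖ * (1 / (k + 1)))
  · exact Filter.Eventually.of_forall fun k => norm_nonneg _
  · have hev : ∀ᶠ k : ℕ in Filter.atTop, t ≤ k + 1 := by
      filter_upwards [Filter.eventually_ge_atTop ⌈t⌉₊] with k hk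
      calc t ≤ (⌈t⌉₊ : ℝ) := Nat.le_ceil t
        _ ≤ (k : ℝ) := by exact_mod_cast hk
        _ ≤ k + 1 := by linarith
    filter_upwards [hev] with k hk
    set ε := t / (k + 1) with hεdef
    have hk1 : (0:ℝ) < k + 1 := by positivity
    have hε0 : 0 ≤ ε := div_nonneg ht (by positivity)
    have hε1 : ε ≤ 1 := by
      rw [hεdef, div_le_one hk1]
      exact hk
    have hεt : (k + 1 : ℝ) * ε = t := by
      rw [hεdef]
      field_simp
    -- exp(t 𝓛) = (exp(ε 𝓛))^(k+1)
    have hexp_pow : NormedSpace.exp ((t:ℂ) • LGen H L)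
        = (NormedSpace.exp ((ε:ℂ) • LGen H L)) ^ (k + 1) := by
      letI : NormedAlgebra ℚ (Matrix n n ℂ →L[ℂ] Matrix n n ℂ) := NormedAlgebra.restrictScalars ℚ ℂ _
      rw [← NormedSpace.exp_nsmul]
      congr 1
      rw [← Nat.cast_smul_eq_nsmul ℂ, smul_smul]
      congr 1
      have : ((k:ℝ) + 1) * ε = t := hεt
      push_cast
      exact_mod_cast (by exact_mod_cast this.symm : (t:ℂ) = ((k:ℝ) + 1 : ℝ) * (ε:ℝ))
    rw [hexp_pow]
    have hTn := norm_TGen_le H L hH hε0 hε1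
    have hEn := norm_expL_le H L (ε := ε) hε0
    have hd := norm_TGen_sub_exp_le H L hH hε0 hε1
    have hpow := my_pow_sub_pow_norm_le (r := Real.exp (ε * a)) hTn hEn k
    have hrk : Real.exp (ε * a) ^ k ≤ Real.exp (t * a) := by
      rw [← Real.exp_nat_mul]
      apply Real.exp_le_exp.mpr
      have : (k:ℝ) * (ε * a) ≤ ((k:ℝ) + 1) * (ε * a) := by nlinarith [mul_nonneg hε0 ha0]
      calc (k:ℝ) * (ε * a) ≤ ((k:ℝ) + 1) * (ε * a) := this
        _ = ((k + 1 : ℝ) * ε) * a := by ring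
        _ = t * a := by rw [hεt]
    calc ‖((TGen H L ε) ^ (k + 1)) ρ₀ - ((NormedSpace.exp ((ε:ℂ) • LGen H L)) ^ (k + 1)) ρ₀‖
        = ‖((TGen H L ε) ^ (k + 1) - (NormedSpace.exp ((ε:ℂ) • LGen H L)) ^ (k + 1)) ρ₀‖ := by
          rw [ContinuousLinearMap.sub_apply]
      _ ≤ ‖(TGen H L ε) ^ (k + 1) - (NormedSpace.exp ((ε:ℂ) • LGen H L)) ^ (k + 1)‖ * ‖ρ₀‖ :=
          ContinuousLinearMap.le_opNorm _ _
      _ ≤ ((k + 1) * Real.exp (ε * a) ^ k * ‖TGen H L ε - NormedSpace.exp ((ε:ℂ) • LGen H L)‖)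
            * ‖ρ₀‖ := by gcongr
      _ ≤ ((k + 1) * Real.exp (t * a) * (ε ^ 2 * C)) * ‖ρ₀‖ := by
          have h1 : (0:ℝ) ≤ (k:ℝ) + 1 := by positivity
          gcongr
      _ = Real.exp (t * a) * C * t ^ 2 * ‖ρ₀‖ * (1 / (k + 1)) := by
          have : ((k:ℝ) + 1) * ε ^ 2 = t ^ 2 / (k + 1) := by
            rw [hεdef]
            field_simp
          rw [hεdef]
          field_simp
  · have h0 : Filter.Tendsto (fun k : ℕ => 1 / ((k:ℝ) + 1)) Filter.atTop (nhds 0) :=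
      tendsto_one_div_add_atTop_nhds_zero_nat
    have := h0.const_mul (Real.exp (t * a) * C * t ^ 2 * ‖ρ₀‖)
    simpa using this


lemma traj_eq_exp (H L ρ₀ : Matrix n n ℂ) (t : ℝ) :
    traj H L ρ₀ t = NormedSpace.exp ((t:ℂ) • LGen H L) ρ₀ := by
  rw [traj, real_smul_eq]
  rfl

lemma traj_posSemidef (H L : Matrix n n ℂ) (hH : H.IsHermitian) {ρ₀ : Matrix n n ℂ}
    (hρ₀ : ρ₀.PosSemidef) {t : ℝ} (ht : 0 ≤ t) : (traj H L ρ₀ t).PosSemidef := by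
  rw [traj_eq_exp]
  apply posSemidef_of_tendsto (fun k : ℕ => ((TGen H L (t / (k + 1))) ^ (k + 1)) ρ₀)
  · intro k
    exact TGen_pow_posSemidef (div_nonneg ht (by positivity)) (k + 1) hρ₀
  · exact tendsto_TGen_pow H L hH ht ρ₀

lemma re_trace_nonneg {M : Matrix n n ℂ} (hM : M.PosSemidef) : 0 ≤ M.trace.re := by
  have h : ∀ i, 0 ≤ (M i i).re := by
    intro i
    have h2 := hM.dotProduct_mulVec_nonneg (Pi.single i 1)
    rw [Complex.le_def] at h2
    have h3 : (star (Pi.single i 1) ⬝ᵥ M *ᵥ Pi.single i 1) = M i i := by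
      simp [dotProduct, Matrix.mulVec, Pi.single_apply, apply_ite star, mul_ite, ite_mul,
        Finset.sum_ite_eq', Finset.sum_ite_eq]
    rw [h3] at h2
    simpa using h2.1
  rw [Matrix.trace]
  rw [Complex.re_sum]
  exact Finset.sum_nonneg fun i _ => h i

lemma re_trace_mul_nonneg {ρ W : Matrix n n ℂ} (hρ : ρ.PosSemidef) (hW : W.PosSemidef) :
    0 ≤ ((ρ * W).trace).re := by
  obtain ⟨B, rfl⟩ := psd_exists_conjTranspose_mul_self hW
  have h : (ρ * (Bᴴ * B)).trace = (B * ρ * Bᴴ).trace := by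
    rw [← mul_assoc, trace_mul_comm, ← mul_assoc]
  rw [h]
  exact re_trace_nonneg (hρ.mul_mul_conjTranspose_same B)

lemma trace_schrod_heis (H L V ρ : Matrix n n ℂ) :
    ((schrodGenLM H L ρ) * V).trace = (ρ * heisGen H L V).trace := by
  have e1 : (H * (ρ * V)).trace = (ρ * (V * H)).trace := by
    rw [trace_mul_comm]
    simp only [mul_assoc]
  have e2 : (L * (ρ * (Lᴴ * V))).trace = (ρ * (Lᴴ * (V * L))).trace := by
    rw [trace_mul_comm]
    simp only [mul_assoc]
  have e3 : (Lᴴ * (L * (ρ * V))).trace = (ρ * (V * (Lᴴ * L))).trace := by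
    rw [← mul_assoc Lᴴ L, trace_mul_comm (Lᴴ * L) (ρ * V)]
    simp only [mul_assoc]
  simp only [schrodGenLM_apply, heisGen, sub_mul, add_mul, mul_sub, mul_add,
    smul_mul_assoc, mul_smul_comm, trace_add, trace_sub, trace_smul, mul_assoc,
    smul_eq_mul]
  linear_combination (-Complex.I) * e1 + e2 - (1/2 : ℂ) * e3

lemma traj_hasDerivAt (H L ρ₀ : Matrix n n ℂ) (t : ℝ) :
    HasDerivAt (fun s : ℝ => traj H L ρ₀ s) (LGen H L (traj H L ρ₀ t)) t := by
  have h1 : HasDerivAt (fun z : ℂ => NormedSpace.exp (z • LGen H L))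
      (LGen H L * NormedSpace.exp ((t:ℂ) • LGen H L)) (t:ℂ) :=
    hasDerivAt_exp_smul_const' (LGen H L) (t:ℂ)
  have h2 : HasDerivAt (fun s : ℝ => NormedSpace.exp ((s:ℂ) • LGen H L))
      (LGen H L * NormedSpace.exp ((t:ℂ) • LGen H L)) t := by
    have hF := (h1.hasFDerivAt.restrictScalars ℝ).comp_hasDerivAt t Complex.ofRealCLM.hasDerivAt
    simpa [Function.comp_def] using hF
  let Φ := ContinuousLinearMap.apply ℂ (Matrix n n ℂ) ρ₀
  have h3 := (Φ.restrictScalars ℝ).hasFDerivAt.comp_hasDerivAt t h2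
  have heq : (fun s : ℝ => traj H L ρ₀ s)
      = fun s : ℝ => Φ (NormedSpace.exp ((s:ℂ) • LGen H L)) := by
    funext s
    rw [traj_eq_exp]
    rfl
  rw [heq]
  exact h3

lemma f_hasDerivAt (H L V ρ₀ : Matrix n n ℂ) (t : ℝ) :
    HasDerivAt (fun s : ℝ => ((traj H L ρ₀ s * V).trace).re)
      (((schrodGenLM H L (traj H L ρ₀ t) * V).trace).re) t := by
  let ψ : Matrix n n ℂ →ₗ[ℂ] ℂ :=
    { toFun := fun M => (M * V).trace
      map_add' := fun a b => by simp [add_mul]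
      map_smul' := fun c a => by simp [smul_mul_assoc] }
  let ψc := LinearMap.toContinuousLinearMap ψ
  have h1 := traj_hasDerivAt H L ρ₀ t
  have h2 := ((ψc.restrictScalars ℝ).hasFDerivAt.comp_hasDerivAt t h1)
  have h3 := (Complex.reCLM.hasFDerivAt.comp_hasDerivAt t h2)
  exact h3

end Aux

/-- the condition `𝓖(V) ≤ -c·V` with `c > 0` implies that every trajectory
converges to the zero solutions of `V`. -/
theorem lyapunov_convergence_to_zero_solutions
    [Fintype n] [DecidableEq n] [Nonempty n]
    (H L : Matrix n n ℂ) (hH : H.IsHermitian)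
    (V : Matrix n n ℂ) (hV : V.IsHermitian) (hVpos : V.PosSemidef)
    (c : ℝ) (hc : 0 < c)
    (hLyap : (-(heisGen H L V + (c : ℂ) • V)).PosSemidef)
    (ρ₀ : Matrix n n ℂ) (hρ₀ : ρ₀.PosSemidef) (hρ₀tr : ρ₀.trace = 1) :
    Filter.Tendsto (fun t : ℝ => ((traj H L ρ₀ t * V).trace).re)
      Filter.atTop (nhds 0) := by
  classical
  set W : Matrix n n ℂ := -(heisGen H L V + (c : ℂ) • V) with hWdef
  have key : ∀ ρ : Matrix n n ℂ,
      ((schrodGenLM H L ρ * V).trace).re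
        = -(c * ((ρ * V).trace).re) - ((ρ * W).trace).re := by
    intro ρ
    have hheis : heisGen H L V = -W - (c:ℂ) • V := by
      rw [hWdef]; abel
    have h2 : (ρ * heisGen H L V).trace = -((ρ * W).trace) - (c:ℂ) * (ρ * V).trace := by
      rw [hheis, mul_sub, mul_neg, trace_sub, trace_neg, mul_smul_comm, trace_smul, smul_eq_mul]
    rw [trace_schrod_heis, h2]
    simp only [Complex.sub_re, Complex.neg_re, Complex.re_ofReal_mul]
    ring
  set f : ℝ → ℝ := fun s => ((traj H L ρ₀ s * V).trace).re with hfdef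
  have hfD : ∀ s, HasDerivAt f (-(c * f s) - ((traj H L ρ₀ s * W).trace).re) s := by
    intro s
    have h := f_hasDerivAt H L V ρ₀ s
    rw [key (traj H L ρ₀ s)] at h
    exact h
  set g : ℝ → ℝ := fun s => Real.exp (c * s) * f s with hgdef
  have hgD : ∀ s, HasDerivAt g (-(Real.exp (c * s) * ((traj H L ρ₀ s * W).trace).re)) s := by
    intro s
    have h1 : HasDerivAt (fun u : ℝ => Real.exp (c * u)) (c * Real.exp (c * s)) s := by
      have h0 : HasDerivAt (fun u : ℝ => c * u) (c * 1) s := (hasDerivAt_id s).const_mul c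
      have := (Real.hasDerivAt_exp (c * s)).comp s h0
      simpa [mul_comm, Function.comp_def] using this
    have h2 := h1.mul (hfD s)
    refine (h2 : HasDerivAt g _ s).congr_deriv ?_
    ring
  have hW_psd : W.PosSemidef := hLyap
  have hg_anti : AntitoneOn g (Set.Ici (0:ℝ)) := by
    apply antitoneOn_of_deriv_nonpos (convex_Ici 0)
    · exact (continuous_iff_continuousAt.mpr fun s => (hgD s).continuousAt).continuousOn
    · intro x hx
      exact (hgD x).differentiableAt.differentiableWithinAt
    · intro x hx
      rw [interior_Ici] at hx
      rw [(hgD x).deriv]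
      have hpos := re_trace_mul_nonneg (traj_posSemidef H L hH hρ₀ (le_of_lt hx)) hW_psd
      have hexp := Real.exp_pos (c * x)
      nlinarith
  have hupper : ∀ t : ℝ, 0 ≤ t → f t ≤ Real.exp (-(c * t)) * f 0 := by
    intro t ht
    have h := hg_anti (Set.self_mem_Ici) ht ht
    have hg0 : g 0 = f 0 := by simp [hgdef]
    have hgt : g t = Real.exp (c * t) * f t := rfl
    rw [hg0, hgt] at h
    calc f t = Real.exp (-(c * t)) * (Real.exp (c * t) * f t) := by
          rw [← mul_assoc, ← Real.exp_add]; simp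
      _ ≤ Real.exp (-(c * t)) * f 0 := mul_le_mul_of_nonneg_left h (Real.exp_nonneg _)
  have hlower : ∀ t : ℝ, 0 ≤ t → 0 ≤ f t :=
    fun t ht => re_trace_mul_nonneg (traj_posSemidef H L hH hρ₀ ht) hVpos
  apply squeeze_zero' (g := fun t => Real.exp (-(c * t)) * f 0)
  · filter_upwards [Filter.eventually_ge_atTop (0:ℝ)] with t ht
    exact hlower t ht
  · filter_upwards [Filter.eventually_ge_atTop (0:ℝ)] with t ht
    exact hupper t ht
  · have h1 : Filter.Tendsto (fun t : ℝ => c * t) Filter.atTop Filter.atTop :=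
      Filter.Tendsto.const_mul_atTop hc Filter.tendsto_id
    have h2 : Filter.Tendsto (fun t : ℝ => -(c * t)) Filter.atTop Filter.atBot :=
      Filter.tendsto_neg_atBot_iff.mpr h1
    have h3 := Real.tendsto_exp_atBot.comp h2
    have h4 := h3.mul_const (f 0)
    simpa using h4
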